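/- Let S be a finite index set, v ≥ 0 a real number, and κᵢ (i ∈ S) independent real random variables. Suppose that for every i ∈ S, the probability that for all j ≠ i we have κⱼ ≤ v is at least 1 − ε, for some ε ∈ [0,1]. Then E[(max_{i∈S} κᵢ − v)₊] ≥ (1 − ε) · ∑_{i∈S} E[(κᵢ − v)₊]. -/

import Mathlib

open MeasureTheory ProbabilityTheory

theorem stmt_10 {Ω ι : Type*} [MeasurableSpace Ω] (μ : Measure Ω) [IsProbabilityMeasure μ]
    (S : Finset ι) (hS : S.Nonempty) (κ : ι → Ω → ℝ) (v ε : ℝ) (hv : 0 ≤ v)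
    (hε0 : 0 ≤ ε) (hε1 : ε ≤ 1)
    (hmeas : ∀ i, Measurable (κ i))
    (hint : ∀ i, Integrable (κ i) μ)
    (hintmax : Integrable (fun ω => max (S.sup' hS (fun i => κ i ω) - v) 0) μ)
    (hindep : iIndepFun κ μ)
    (hcover : ∀ i ∈ S, ENNReal.ofReal (1 - ε) ≤ μ {ω | ∀ j ∈ S, j ≠ i → κ j ω ≤ v}) :
    (1 - ε) * ∑ i ∈ S, ∫ ω, max (κ i ω - v) 0 ∂μ
      ≤ ∫ ω, max (S.sup' hS (fun i => κ i ω) - v) 0 ∂μ := by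
  classical
  set A : ι → Set Ω := fun i => {ω | ∀ j ∈ S, j ≠ i → κ j ω ≤ v} with hA
  set g : ι → Ω → ℝ := fun i ω => max (κ i ω - v) 0 with hg
  have hgint : ∀ i, Integrable (g i) μ := fun i =>
    ((hint i).sub (integrable_const v)).pos_part
  have hgnn : ∀ i ω, 0 ≤ g i ω := fun i ω => le_max_right _ _
  have hAmeas : ∀ i, MeasurableSet (A i) := by
    intro i
    have : A i = ⋂ j ∈ S, ⋂ _ : j ≠ i, {ω | κ j ω ≤ v} := by
      ext ω; simp [hA, Set.mem_iInter]
    rw [this]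
    exact MeasurableSet.biInter S.countable_toSet fun j _ =>
      MeasurableSet.iInter fun _ => measurableSet_le (hmeas j) measurable_const
  -- key independence step
  have key : ∀ i ∈ S, (1 - ε) * ∫ ω, g i ω ∂μ ≤ ∫ ω, (A i).indicator (g i) ω ∂μ := by
    intro i hi
    have hdisj : Disjoint ({i} : Finset ι) (S.erase i) := by
      simp [Finset.disjoint_left]
    set E := S.erase i with hE
    have hIF := hindep.indepFun_finset {i} E hdisj hmeas
    set φ : (({i} : Finset ι) → ℝ) → ℝ := fun x => max (x ⟨i, Finset.mem_singleton_self i⟩ - v) 0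
    set B : Set (↥E → ℝ) := {x | ∀ k, x k ≤ v} with hB
    have hBmeas : MeasurableSet B := by
      have : B = ⋂ k, {x : ↥E → ℝ | x k ≤ v} := by
        ext x; simp [hB, Set.mem_iInter]
      rw [this]
      exact MeasurableSet.iInter fun k => measurableSet_le (measurable_pi_apply k) measurable_const
    set ψ : (↥E → ℝ) → ℝ := B.indicator (fun _ => (1 : ℝ))
    have hφ : Measurable φ :=
      ((measurable_pi_apply _).sub measurable_const).max measurable_const
    have hψ : Measurable ψ := measurable_const.indicator hBmeas
    have hIF2 := hIF.comp hφ hψ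
    have hcompφ : (φ ∘ fun a (k : ({i} : Finset ι)) => κ k a) = g i := by
      funext ω; simp [φ, hg]
    have hcompψ : (ψ ∘ fun a (k : ↥E) => κ k a)
        = (A i).indicator (fun _ => (1 : ℝ)) := by
      funext ω
      by_cases h : ω ∈ A i
      · have : (fun k : ↥E => κ k ω) ∈ B := by
          intro k
          exact h k.1 (Finset.mem_of_mem_erase k.2) (Finset.ne_of_mem_erase k.2)
        simp [ψ, Function.comp, Set.indicator_of_mem this, Set.indicator_of_mem h]
      · have : (fun k : ↥E => κ k ω) ∉ B := by
          intro hc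
          apply h
          intro j hj hne
          exact hc ⟨j, Finset.mem_erase.2 ⟨hne, hj⟩⟩
        simp [ψ, Function.comp, Set.indicator_of_notMem this, Set.indicator_of_notMem h]
    rw [hcompφ, hcompψ] at hIF2
    have hmul : ∫ ω, g i ω * (A i).indicator (fun _ => (1 : ℝ)) ω ∂μ
        = (∫ ω, g i ω ∂μ) * ∫ ω, (A i).indicator (fun _ => (1 : ℝ)) ω ∂μ :=
      IndepFun.integral_mul_eq_mul_integral hIF2
      ((hgint i).aestronglyMeasurable)
      ((measurable_const.indicator (hAmeas i)).aestronglyMeasurable)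
    have hind_eq : (fun ω => g i ω * (A i).indicator (fun _ => (1 : ℝ)) ω)
        = (A i).indicator (g i) := by
      funext ω
      by_cases h : ω ∈ A i <;>
        simp [Set.indicator_of_mem, Set.indicator_of_notMem, h]
    rw [hind_eq] at hmul
    have h1 : integral μ ((A i).indicator fun _ => (1:ℝ)) = (μ (A i)).toReal :=
      integral_indicator_one (hAmeas i)
    rw [hmul, h1]
    have hμA : 1 - ε ≤ (μ (A i)).toReal := by
      have h1 := hcover i hi
      have h2 : (ENNReal.ofReal (1 - ε)).toReal ≤ (μ (A i)).toReal :=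
        ENNReal.toReal_mono (measure_ne_top μ _) h1
      rwa [ENNReal.toReal_ofReal (by linarith)] at h2
    have hgI : 0 ≤ ∫ ω, g i ω ∂μ := integral_nonneg fun ω => hgnn i ω
    calc (1 - ε) * ∫ ω, g i ω ∂μ ≤ (μ (A i)).toReal * ∫ ω, g i ω ∂μ :=
          mul_le_mul_of_nonneg_right hμA hgI
      _ = (∫ ω, g i ω ∂μ) * (μ (A i)).toReal := mul_comm _ _
  -- pointwise bound
  have hpt : ∀ ω, ∑ i ∈ S, (A i).indicator (g i) ω
      ≤ max (S.sup' hS (fun i => κ i ω) - v) 0 := by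
    intro ω
    set M := max (S.sup' hS (fun i => κ i ω) - v) 0 with hM
    have hMnn : 0 ≤ M := le_max_right _ _
    have hgM : ∀ i ∈ S, g i ω ≤ M := fun i hi =>
      max_le_max (sub_le_sub_right (Finset.le_sup' (fun j => κ j ω) hi) v) le_rfl
    by_cases hex : ∃ i₀ ∈ S, ω ∈ A i₀ ∧ v < κ i₀ ω
    · obtain ⟨i₀, hi₀, hAi₀, hvκ⟩ := hex
      have : ∑ i ∈ S, (A i).indicator (g i) ω = (A i₀).indicator (g i₀) ω := by
        refine Finset.sum_eq_single_of_mem i₀ hi₀ fun j hj hne => ?_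
        have hgj : g j ω = 0 := by
          have := hAi₀ j hj hne
          simp [hg, max_eq_right, sub_nonpos.2 this]
        by_cases h : ω ∈ A j <;> simp [Set.indicator_of_mem, Set.indicator_of_notMem, h, hgj]
      rw [this]
      calc (A i₀).indicator (g i₀) ω ≤ g i₀ ω := Set.indicator_le_self' (fun _ _ => hgnn i₀ _) ω
        _ ≤ M := hgM i₀ hi₀
    · push_neg at hex
      have : ∀ i ∈ S, (A i).indicator (g i) ω = 0 := by
        intro i hi
        by_cases h : ω ∈ A i
        · have := hex i hi h
          simp [Set.indicator_of_mem h, hg, max_eq_right, sub_nonpos.2 this]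
        · simp [Set.indicator_of_notMem h]
      rw [Finset.sum_eq_zero this]
      exact hMnn
  have hindint : ∀ i, Integrable ((A i).indicator (g i)) μ :=
    fun i => (hgint i).indicator (hAmeas i)
  calc (1 - ε) * ∑ i ∈ S, ∫ ω, g i ω ∂μ
      = ∑ i ∈ S, (1 - ε) * ∫ ω, g i ω ∂μ := Finset.mul_sum _ _ _
    _ ≤ ∑ i ∈ S, ∫ ω, (A i).indicator (g i) ω ∂μ := Finset.sum_le_sum key
    _ = ∫ ω, ∑ i ∈ S, (A i).indicator (g i) ω ∂μ :=
        (integral_finset_sum S fun i _ => hindint i).symm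
    _ ≤ ∫ ω, max (S.sup' hS (fun i => κ i ω) - v) 0 ∂μ := by
        refine integral_mono (integrable_finset_sum S fun i _ => hindint i) hintmax hpt
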